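/- Let U be a unitary operator on a separable Hilbert space with cyclic unit vector φ, spectral measure μ, and Carathéodory function F(z) = ∫ (e^{iθ}+z)/(e^{iθ}−z) dμ(θ) = (1+zg(z))/(1−zg(z)) defining the Schur function g. Then the singular part of μ is supported on the set of z ∈ ∂𝔻 for which lim_{r↑1} rz·g(rz) = 1. -/

import Mathlib

open MeasureTheory Filter

noncomputable instance : MeasurableSpace Circle := borel Circle
instance : BorelSpace Circle := ⟨rfl⟩

open Metric Set Complex
open scoped ENNReal NNReal Topology Real

instance factTwoPi : Fact (0 < 2 * Real.pi) := ⟨by positivity⟩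

/-- The argument map on the circle. -/
noncomputable def cArg (z : Circle) : ℝ := Complex.arg (z : ℂ)

lemma circle_ms_eq : (Subtype.instMeasurableSpace : MeasurableSpace Circle) = borel Circle := by
  have : BorelSpace (Submonoid.unitSphere ℂ : Set ℂ) := Subtype.borelSpace _
  exact this.measurable_eq

lemma measurable_cArg : Measurable cArg := by
  have h : @Measurable Circle ℝ Subtype.instMeasurableSpace _ cArg :=
    Complex.measurable_arg.comp measurable_subtype_coe
  rw [circle_ms_eq] at h
  exact h

lemma cexp_cArg (z : Circle) : Complex.exp (cArg z * Complex.I) = (z : ℂ) := by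
  have h := Complex.norm_mul_exp_arg_mul_I (z : ℂ)
  rwa [Circle.norm_coe, ofReal_one, one_mul] at h

lemma dist_le_cArg (z w : Circle) : dist z w ≤ |cArg z - cArg w| := by
  have h := (lipschitzWith_circleMap 0 1).dist_le_mul (cArg z) (cArg w)
  simp only [circleMap, zero_add, ofReal_one, one_mul] at h
  rw [cexp_cArg, cexp_cArg] at h
  have hd : dist z w = dist (z : ℂ) (w : ℂ) := rfl
  rw [hd]
  simpa [Real.dist_eq] using h

lemma homCircle_add (a b : AddCircle (2 * Real.pi)) :
    AddCircle.homeomorphCircle' (a + b) =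
      AddCircle.homeomorphCircle' a * AddCircle.homeomorphCircle' b := by
  obtain ⟨u, rfl⟩ := QuotientAddGroup.mk_surjective a
  obtain ⟨v, rfl⟩ := QuotientAddGroup.mk_surjective b
  rw [← QuotientAddGroup.mk_add]
  rw [AddCircle.homeomorphCircle'_apply_mk, AddCircle.homeomorphCircle'_apply_mk,
    AddCircle.homeomorphCircle'_apply_mk, Circle.exp_add]

/-- Haar-null sets on the circle have Lebesgue-null `arg`-image. -/
lemma vol_image_cArg_null {S : Set Circle} (hS : MeasurableSet S)
    (h0 : MeasureTheory.Measure.haar S = 0) : volume (cArg '' S) = 0 := by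
  have hmeas_h : Measurable (⇑(AddCircle.homeomorphCircle' : AddCircle (2 * Real.pi) ≃ₜ Circle)) :=
    (AddCircle.homeomorphCircle').continuous.measurable
  set mh : Measure Circle :=
    Measure.map (⇑AddCircle.homeomorphCircle') (volume : Measure (AddCircle (2 * Real.pi)))
    with hmh
  haveI : mh.IsMulLeftInvariant := by
    constructor
    intro g
    have hg : Measurable (fun x : Circle => g * x) := (continuous_mul_left g).measurable
    rw [hmh, Measure.map_map hg hmeas_h]
    set a := (AddCircle.homeomorphCircle' : AddCircle (2 * Real.pi) ≃ₜ Circle).symm g with ha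
    have hcomp : (fun x : Circle => g * x) ∘ (⇑AddCircle.homeomorphCircle') =
        (⇑AddCircle.homeomorphCircle') ∘ (fun x : AddCircle (2 * Real.pi) => a + x) := by
      funext x
      simp only [Function.comp_apply, homCircle_add, ha, Homeomorph.apply_symm_apply]
    rw [hcomp, ← Measure.map_map hmeas_h (measurable_const_add a),
      MeasureTheory.map_add_left_eq_self _ a]
  haveI : IsFiniteMeasure mh := by rw [hmh]; infer_instance
  have huniq := Measure.isMulInvariant_eq_smul_of_compactSpace mh Measure.haar
  have hmhS : mh S = 0 := by rw [huniq]; simp [h0]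
  have hpre : MeasurableSet
      ((⇑AddCircle.homeomorphCircle') ⁻¹' S : Set (AddCircle (2 * Real.pi))) := hmeas_h hS
  have hvol := AddCircle.add_projection_respects_measure (T := 2 * Real.pi) (-Real.pi) hpre
  have hmap : mh S = volume ((⇑AddCircle.homeomorphCircle') ⁻¹' S) :=
    Measure.map_apply hmeas_h hS
  have hsub : cArg '' S ⊆
      ((QuotientAddGroup.mk ⁻¹' ((⇑AddCircle.homeomorphCircle') ⁻¹' S) : Set ℝ) ∩
        Ioc (-Real.pi) (-Real.pi + 2 * Real.pi)) := by
    rintro θ ⟨z, hz, rfl⟩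
    refine ⟨?_, Complex.neg_pi_lt_arg _, by
      have := Complex.arg_le_pi (z : ℂ); simp only [cArg]; linarith⟩
    show AddCircle.homeomorphCircle' ((cArg z : ℝ) : AddCircle (2 * Real.pi)) ∈ S
    rw [AddCircle.homeomorphCircle'_apply_mk]
    have he : Circle.exp (cArg z) = z := Circle.exp_arg z
    rw [he]; exact hz
  have hle := measure_mono (μ := (volume : Measure ℝ)) hsub
  rw [← hvol, ← hmap, hmhS] at hle
  exact le_antisymm hle zero_le

/-- Poisson kernel identity. -/
lemma poisson_re (w ζ : ℂ) (hw : Complex.normSq w = 1) (hne : w ≠ ζ) :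
    ((w + ζ) / (w - ζ)).re = (1 - Complex.normSq ζ) / Complex.normSq (w - ζ) := by
  have hsub : w - ζ ≠ 0 := sub_ne_zero.2 hne
  have hns : Complex.normSq (w - ζ) ≠ 0 := by
    simpa [Complex.normSq_eq_zero] using hsub
  rw [Complex.div_re, ← add_div]
  congr 1
  simp only [Complex.add_re, Complex.add_im, Complex.sub_re, Complex.sub_im,
    Complex.normSq_apply] at *
  linear_combination hw

/-- Lower bound for the Poisson integral. -/
lemma poisson_lower (μ : Measure Circle) [IsFiniteMeasure μ] (z : Circle) (r : ℝ)
    (hr0 : 0 < r) (hr1 : r < 1) :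
    (μ (Metric.closedBall z (1 - r))).toReal / (4 * (1 - r)) ≤
      (∫ w : Circle, ((w : ℂ) + (r : ℂ) * z) / ((w : ℂ) - (r : ℂ) * z) ∂μ).re := by
  set ζ : ℂ := (r : ℂ) * z with hζdef
  have hζ : ‖ζ‖ = r := by
    rw [hζdef, norm_mul, Complex.norm_real, Real.norm_eq_abs, Circle.norm_coe, abs_of_pos hr0, mul_one]
  have hne : ∀ w : Circle, (w : ℂ) ≠ ζ := by
    intro w h
    have h2 : ‖(w : ℂ)‖ = r := by rw [h, hζ]
    rw [Circle.norm_coe] at h2; linarith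
  have hcont : Continuous (fun w : Circle => ((w : ℂ) + ζ) / ((w : ℂ) - ζ)) := by
    refine Continuous.div (continuous_subtype_val.add continuous_const)
      (continuous_subtype_val.sub continuous_const) ?_
    intro w; exact sub_ne_zero.2 (hne w)
  have hint : Integrable (fun w : Circle => ((w : ℂ) + ζ) / ((w : ℂ) - ζ)) μ :=
    hcont.integrable_of_hasCompactSupport (isClosed_tsupport _).isCompact
  have hre : ∀ w : Circle, (((w : ℂ) + ζ) / ((w : ℂ) - ζ)).re
      = (1 - Complex.normSq ζ) / Complex.normSq ((w : ℂ) - ζ) := fun w =>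
    poisson_re _ _ (Circle.normSq_coe w) (hne w)
  have hnsζ : Complex.normSq ζ = r ^ 2 := by
    rw [Complex.normSq_eq_norm_sq, hζ]
  have h0 : ∀ w : Circle, 0 ≤ (((w : ℂ) + ζ) / ((w : ℂ) - ζ)).re := by
    intro w; rw [hre w, hnsζ]
    apply div_nonneg _ (Complex.normSq_nonneg _)
    nlinarith
  have hire : (∫ w : Circle, ((w : ℂ) + ζ) / ((w : ℂ) - ζ) ∂μ).re
      = ∫ w : Circle, (((w : ℂ) + ζ) / ((w : ℂ) - ζ)).re ∂μ := by
    have := integral_re hint (𝕜 := ℂ)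
    simpa using this.symm
  rw [hire]
  have hB : MeasurableSet (Metric.closedBall z (1 - r)) := measurableSet_closedBall
  have step1 : ∫ w in Metric.closedBall z (1 - r), (((w : ℂ) + ζ) / ((w : ℂ) - ζ)).re ∂μ
      ≤ ∫ w : Circle, (((w : ℂ) + ζ) / ((w : ℂ) - ζ)).re ∂μ :=
    setIntegral_le_integral hint.re (Filter.Eventually.of_forall h0)
  have hbound : ∀ w ∈ Metric.closedBall z (1 - r),
      1 / (4 * (1 - r)) ≤ (((w : ℂ) + ζ) / ((w : ℂ) - ζ)).re := by
    intro w hw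
    rw [hre w, hnsζ]
    have h1 : dist w z ≤ 1 - r := mem_closedBall.1 hw
    have h2 : ‖(w : ℂ) - (z : ℂ)‖ ≤ 1 - r := by
      have : ‖(w : ℂ) - (z : ℂ)‖ = dist (w : ℂ) (z : ℂ) := (Complex.dist_eq _ _).symm
      rw [this]; exact h1
    have h3 : ‖(z : ℂ) - ζ‖ = 1 - r := by
      have he : (z : ℂ) - ζ = ((1 - r : ℝ) : ℂ) * z := by rw [hζdef]; push_cast; ring
      rw [he, norm_mul, Complex.norm_real, Real.norm_eq_abs, Circle.norm_coe, abs_of_pos (by linarith), mul_one]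
    have hd : ‖(w : ℂ) - ζ‖ ≤ 2 * (1 - r) := by
      calc ‖(w : ℂ) - ζ‖
          ≤ ‖(w : ℂ) - (z : ℂ)‖ + ‖(z : ℂ) - ζ‖ :=
            norm_sub_le_norm_sub_add_norm_sub (w : ℂ) (z : ℂ) ζ
        _ ≤ (1 - r) + (1 - r) := by rw [h3]; linarith
        _ = 2 * (1 - r) := by ring
    have hns : Complex.normSq ((w : ℂ) - ζ) ≤ (2 * (1 - r)) ^ 2 := by
      rw [Complex.normSq_eq_norm_sq]
      exact pow_le_pow_left₀ (norm_nonneg _) hd 2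
    have hpos : 0 < Complex.normSq ((w : ℂ) - ζ) :=
      Complex.normSq_pos.2 (sub_ne_zero.2 (hne w))
    rw [div_le_div_iff₀ (by nlinarith : (0:ℝ) < 4 * (1 - r)) hpos]
    nlinarith [hns, mul_pos hr0 (sub_pos.2 hr1)]
  have step2 := setIntegral_ge_of_const_le hB (measure_ne_top μ _) hbound hint.re.integrableOn
  have heq : 1 / (4 * (1 - r)) * (μ (Metric.closedBall z (1 - r))).toReal
      = (μ (Metric.closedBall z (1 - r))).toReal / (4 * (1 - r)) := by ring
  rw [smul_eq_mul, measureReal_def] at step2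
  linarith [step1, step2]

/-- `μ` is the spectral measure on the unit circle of `φ` for the unitary `U`. -/
def SpecMeasOfU {H : Type*} [NormedAddCommGroup H] [InnerProductSpace ℂ H] [CompleteSpace H]
    (U : H →L[ℂ] H) (φ : H) (μ : Measure Circle) : Prop :=
  IsFiniteMeasure μ ∧ ∀ n : ℕ, (inner ℂ φ ((U ^ n) φ) : ℂ) = ∫ z : Circle, (z : ℂ) ^ n ∂μ

/-- If `U` is unitary with cyclic unit vector `φ`, spectral measure `μ`, Carathéodory
function `F(z) = ∫ (w+z)/(w−z) dμ(w) = (1+zg(z))/(1−zg(z))` with Schur function `g`, then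
the singular part of `μ` (w.r.t. Haar measure) is supported on
`{z ∈ ∂𝔻 : lim_{r↑1} rz·g(rz) = 1}`. -/
theorem singular_part_supported_on_schur_boundary_one
    {H : Type*} [NormedAddCommGroup H] [InnerProductSpace ℂ H] [CompleteSpace H]
    [TopologicalSpace.SeparableSpace H]
    (U : H →L[ℂ] H) (hU : U ∈ unitary (H →L[ℂ] H)) (φ : H) (hφ : ‖φ‖ = 1)
    (hcyc : (Submodule.span ℂ
      (Set.range (fun n : ℕ => (U ^ n) φ) ∪
        Set.range (fun n : ℕ => ((star U) ^ n) φ))).topologicalClosure = ⊤)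
    (μ : Measure Circle) (hμ : SpecMeasOfU U φ μ) [IsProbabilityMeasure μ]
    (g : ℂ → ℂ) (hg : ∀ z : ℂ, ‖z‖ < 1 → ‖g z‖ ≤ 1)
    (hCar : ∀ z : ℂ, ‖z‖ < 1 →
      ∫ w : Circle, ((w : ℂ) + z) / ((w : ℂ) - z) ∂μ = (1 + z * g z) / (1 - z * g z)) :
    (μ.singularPart Measure.haar)
      {z : Circle | ¬ Tendsto (fun r : ℝ => (r : ℂ) * (z : ℂ) * g ((r : ℂ) * (z : ℂ)))
          (nhdsWithin 1 (Set.Iio 1)) (nhds 1)} = 0 := by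
  set σ : Measure Circle := μ.singularPart Measure.haar with hσdef
  have hemb : MeasurableEmbedding cArg := measurable_cArg.measurableEmbedding Circle.injective_arg
  set τ : Measure ℝ := Measure.map cArg σ with hτdef
  haveI : IsFiniteMeasure τ := by rw [hτdef]; infer_instance
  obtain ⟨s, hs_meas, hσs, hhaar⟩ := Measure.mutuallySingular_singularPart μ Measure.haar
  have hvolT : volume (cArg '' sᶜ) = 0 := vol_image_cArg_null hs_meas.compl hhaar
  have hT_meas : MeasurableSet (cArg '' sᶜ) := hemb.measurableSet_image.2 hs_meas.compl
  have hsing : (volume : Measure ℝ) ⟂ₘ τ := by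
    refine ⟨cArg '' sᶜ, hT_meas, hvolT, ?_⟩
    rw [hτdef, Measure.map_apply measurable_cArg hT_meas.compl]
    refine measure_mono_null ?_ hσs
    intro x hx
    by_contra hxs
    exact hx (Set.mem_image_of_mem _ hxs)
  have hbes := Besicovitch.ae_tendsto_rnDeriv (volume : Measure ℝ) τ
  have hrn : (volume : Measure ℝ).rnDeriv τ =ᵐ[τ] 0 := (Measure.rnDeriv_eq_zero _ _).2 hsing
  have hzero : ∀ᵐ θ ∂τ, Tendsto (fun δ => volume (closedBall θ δ) / τ (closedBall θ δ))
      (nhdsWithin 0 (Set.Ioi 0)) (nhds 0) := by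
    filter_upwards [hbes, hrn] with θ h1 h2
    rw [h2] at h1
    simpa using h1
  have hratio : ∀ᵐ θ ∂τ, Tendsto (fun δ => (τ (closedBall θ δ)).toReal / δ)
      (nhdsWithin 0 (Set.Ioi 0)) atTop := by
    filter_upwards [hzero] with θ hθ
    rw [Filter.tendsto_atTop]
    intro b
    have hb' : (0:ℝ) < max b 1 := lt_of_lt_of_le one_pos (le_max_right _ _)
    have hεpos : (0:ℝ≥0∞) < (ENNReal.ofReal (4 * max b 1))⁻¹ := by
      exact ENNReal.inv_pos.2 ENNReal.ofReal_ne_top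
    have hev := (ENNReal.tendsto_nhds_zero.1 hθ) _ hεpos
    filter_upwards [hev, self_mem_nhdsWithin] with δ h1 h2
    have hδ : (0:ℝ) < δ := h2
    set A := τ (closedBall θ δ) with hA
    have hAne : A ≠ ⊤ := measure_ne_top τ _
    have hvol2 : volume (closedBall θ δ) = ENNReal.ofReal (2 * δ) := by
      rw [Real.volume_closedBall]
    have hvne : volume (closedBall θ δ) ≠ 0 := by
      rw [hvol2]; exact (ENNReal.ofReal_pos.2 (by linarith)).ne'
    have hA0 : A ≠ 0 := by
      intro h0
      rw [h0, ENNReal.div_zero hvne] at h1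
      have h2' := top_le_iff.1 h1
      have h3' := ENNReal.inv_eq_top.1 h2'
      have h4' := ENNReal.ofReal_eq_zero.1 h3'
      linarith
    have htR : 0 < A.toReal := ENNReal.toReal_pos hA0 hAne
    have hεne : (ENNReal.ofReal (4 * max b 1))⁻¹ ≠ ⊤ :=
      ENNReal.inv_ne_top.2 (ENNReal.ofReal_pos.2 (by linarith)).ne'
    have h1' : (2 * δ) / A.toReal ≤ 1 / (4 * max b 1) := by
      have hh := ENNReal.toReal_mono hεne h1
      rw [ENNReal.toReal_div, hvol2, ENNReal.toReal_ofReal (by linarith)] at hh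
      rw [ENNReal.toReal_inv, ENNReal.toReal_ofReal (by linarith : (0:ℝ) ≤ 4 * max b 1)] at hh
      simpa [one_div] using hh
    rw [div_le_div_iff₀ htR (by positivity)] at h1'
    have hb : b ≤ max b 1 := le_max_left _ _
    rw [le_div_iff₀ hδ]
    nlinarith
  have hfinal : ∀ᵐ zc ∂σ, Tendsto (fun δ => (τ (closedBall (cArg zc) δ)).toReal / δ)
      (nhdsWithin 0 (Set.Ioi 0)) atTop := by
    rw [hτdef] at hratio
    exact (hemb.ae_map_iff).1 hratio
  have hae : ∀ᵐ (zc : Circle) ∂σ, Tendsto (fun r : ℝ => (r : ℂ) * (zc : ℂ) * g ((r : ℂ) * (zc : ℂ)))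
      (nhdsWithin 1 (Set.Iio 1)) (nhds 1) := by
    filter_upwards [hfinal] with zc hzc
    have hmono : ∀ δ : ℝ, τ (closedBall (cArg zc) δ) ≤ μ (Metric.closedBall zc δ) := by
      intro δ
      have hle : τ (closedBall (cArg zc) δ) ≤ Measure.map cArg μ (closedBall (cArg zc) δ) := by
        rw [hτdef]
        exact Measure.le_iff'.1
          (Measure.map_mono (Measure.singularPart_le μ _) measurable_cArg) _
      have hle2 : Measure.map cArg μ (closedBall (cArg zc) δ) ≤ μ (Metric.closedBall zc δ) := by
        rw [Measure.map_apply measurable_cArg measurableSet_closedBall]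
        refine measure_mono ?_
        intro w hw
        simp only [Set.mem_preimage, Metric.mem_closedBall] at *
        calc dist w zc ≤ |cArg w - cArg zc| := dist_le_cArg w zc
          _ = dist (cArg w) (cArg zc) := (Real.dist_eq _ _).symm
          _ ≤ δ := hw
      exact hle.trans hle2
    set F : ℝ → ℝ := fun r =>
      (∫ w : Circle, ((w : ℂ) + (r : ℂ) * (zc : ℂ)) / ((w : ℂ) - (r : ℂ) * (zc : ℂ)) ∂μ).re
      with hFdef
    have hIoo : Set.Ioo (0:ℝ) 1 ∈ nhdsWithin (1:ℝ) (Set.Iio 1) :=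
      Ioo_mem_nhdsLT_of_mem ⟨zero_lt_one, le_refl 1⟩
    have hcomp : Tendsto (fun r : ℝ => 1 - r) (nhdsWithin 1 (Set.Iio 1))
        (nhdsWithin 0 (Set.Ioi 0)) := by
      apply tendsto_nhdsWithin_of_tendsto_nhds_of_eventually_within
      · have h : Tendsto (fun r : ℝ => 1 - r) (nhds 1) (nhds (1 - 1)) :=
          tendsto_const_nhds.sub tendsto_id
        simpa using h.mono_left nhdsWithin_le_nhds
      · filter_upwards [self_mem_nhdsWithin] with r hr
        simp only [Set.mem_Iio] at hr
        exact sub_pos.2 hr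
    have hlow := hzc.comp hcomp
    have hlow4 : Tendsto (fun r : ℝ => (τ (closedBall (cArg zc) (1 - r))).toReal / (4 * (1 - r)))
        (nhdsWithin 1 (Set.Iio 1)) atTop := by
      have h4 := hlow.atTop_div_const (by norm_num : (0:ℝ) < 4)
      refine h4.congr fun r => ?_
      show (τ (closedBall (cArg zc) (1 - r))).toReal / (1 - r) / 4 = _
      rw [div_div, mul_comm]
    have hFtop : Tendsto F (nhdsWithin 1 (Set.Iio 1)) atTop := by
      refine tendsto_atTop_mono' _ ?_ hlow4
      filter_upwards [hIoo] with r hr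
      have hp := poisson_lower μ zc r hr.1 hr.2
      refine le_trans ?_ hp
      have hto := ENNReal.toReal_mono (measure_ne_top μ _) (hmono (1 - r))
      have h4pos : (0:ℝ) < 4 * (1 - r) := by nlinarith [hr.2]
      exact div_le_div_of_nonneg_right hto h4pos.le
    have hnormrz : ∀ r : ℝ, 0 < r → r < 1 → ‖(r : ℂ) * (zc : ℂ)‖ < 1 := by
      intro r h0 h1
      rw [norm_mul, Complex.norm_real, Real.norm_eq_abs, abs_of_pos h0]
      have hz1 : ‖(zc : ℂ)‖ = 1 := by rw [Circle.norm_coe]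
      rw [hz1, mul_one]; exact h1
    have hev2 : ∀ᶠ (r : ℝ) in nhdsWithin (1:ℝ) (Set.Iio 1),
        ‖1 - (r : ℂ) * (zc : ℂ) * g ((r : ℂ) * (zc : ℂ))‖ ≤ 2 / F r := by
      filter_upwards [hIoo, hFtop.eventually_ge_atTop 1] with r hr hF1
      set u : ℂ := (r : ℂ) * (zc : ℂ) * g ((r : ℂ) * (zc : ℂ)) with hu
      have hrz1 : ‖(r : ℂ) * (zc : ℂ)‖ < 1 := hnormrz r hr.1 hr.2
      have hur : ‖u‖ < 1 := by
        rw [hu, norm_mul]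
        have hgle := hg _ hrz1
        have h1' : ‖(r:ℂ) * (zc:ℂ)‖ * ‖g ((r:ℂ) * (zc:ℂ))‖ ≤ ‖(r:ℂ) * (zc:ℂ)‖ * 1 :=
          mul_le_mul_of_nonneg_left hgle (norm_nonneg _)
        rw [mul_one] at h1'
        exact lt_of_le_of_lt h1' hrz1
      have h1u : (0:ℝ) < ‖1 - u‖ := by
        rw [norm_pos_iff, sub_ne_zero]
        intro h
        rw [← h] at hur
        simp at hur
      have hFeq : F r = ((1 + u) / (1 - u)).re := by
        show (∫ w : Circle,
          ((w : ℂ) + (r : ℂ) * (zc : ℂ)) / ((w : ℂ) - (r : ℂ) * (zc : ℂ)) ∂μ).re = _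
        rw [hCar _ hrz1]
      have hre_le : F r ≤ 2 / ‖1 - u‖ := by
        rw [hFeq]
        have habs : ‖1 + u‖ ≤ 2 := by
          calc ‖1 + u‖ ≤ ‖(1:ℂ)‖ + ‖u‖ := norm_add_le _ _
            _ ≤ 1 + 1 := by
                simp only [norm_one]
                linarith [hur.le]
            _ = 2 := by norm_num
        calc ((1 + u) / (1 - u)).re ≤ ‖(1 + u) / (1 - u)‖ := Complex.re_le_norm _
          _ = ‖1 + u‖ / ‖1 - u‖ := norm_div _ _
          _ ≤ 2 / ‖1 - u‖ := by
              rw [show ‖1 - u‖ = ‖1 - u‖ from rfl]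
              exact (div_le_div_iff_of_pos_right h1u).2 habs
      have hFpos : (0:ℝ) < F r := lt_of_lt_of_le one_pos hF1
      rw [le_div_iff₀ hFpos]
      have h2 := (le_div_iff₀ h1u).1 hre_le
      nlinarith [h2]
    have h2F : Tendsto (fun r => 2 / F r) (nhdsWithin (1:ℝ) (Set.Iio 1)) (nhds 0) :=
      Tendsto.div_atTop tendsto_const_nhds hFtop
    have hnt : Tendsto (fun r : ℝ => ‖1 - (r : ℂ) * (zc : ℂ) * g ((r : ℂ) * (zc : ℂ))‖)
        (nhdsWithin (1:ℝ) (Set.Iio 1)) (nhds 0) :=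
      squeeze_zero' (Filter.Eventually.of_forall fun r => norm_nonneg _) hev2 h2F
    rw [tendsto_iff_norm_sub_tendsto_zero]
    refine hnt.congr fun r => ?_
    rw [norm_sub_rev]
  exact MeasureTheory.ae_iff.1 hae
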